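/- Let m ∈ ℕ, λ ∈ ℝ, let F : [0,∞) → (m × m real matrices) and g : [0,∞) → ℝ^m (row vectors) be continuous, and let A : [0,∞) → (m × m real matrices) be differentiable with A'(t) = F(t)·A(t) and A(0) = 1. Suppose ψ₁, ψ₂ : [0,∞) → ℝ^m are both differentiable and both satisfy ψᵢ'(t) = −ψᵢ(t)·F(t) − λ·g(t) for all t ≥ 0, and both satisfy lim_{t→∞} ψᵢ(t)·A(t) = 0. Then ψ₁ = ψ₂. -/

import Mathlib

open Filter Topology

/-- Uniqueness assertion of Theorem 2 ('aff_') of the paper: at most one solution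
of the adjoint equation `ψ' = −ψF − λg` satisfies the transversality condition
`lim_{t→∞} ψ(t)·A(t) = 0`, where `A` is the fundamental matrix of `x' = F(t)x`. -/
theorem stmt_10 (m : ℕ) (lam : ℝ)
    (F : ℝ → Matrix (Fin m) (Fin m) ℝ) (g : ℝ → Fin m → ℝ)
    (hFc : ∀ i j, ContinuousOn (fun t => F t i j) (Set.Ici 0))
    (hgc : ∀ i, ContinuousOn (fun t => g t i) (Set.Ici 0))
    (A : ℝ → Matrix (Fin m) (Fin m) ℝ)
    (hA : ∀ t ≥ (0:ℝ), ∀ i j,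
      HasDerivWithinAt (fun s => A s i j) ((F t * A t) i j) (Set.Ici 0) t)
    (hA0 : A 0 = 1)
    (ψ₁ ψ₂ : ℝ → Fin m → ℝ)
    (hψ₁ : ∀ t ≥ (0:ℝ),
      HasDerivWithinAt ψ₁ (-(Matrix.vecMul (ψ₁ t) (F t)) - lam • g t) (Set.Ici 0) t)
    (hψ₂ : ∀ t ≥ (0:ℝ),
      HasDerivWithinAt ψ₂ (-(Matrix.vecMul (ψ₂ t) (F t)) - lam • g t) (Set.Ici 0) t)
    (hlim₁ : Tendsto (fun t => Matrix.vecMul (ψ₁ t) (A t)) atTop (𝓝 0))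
    (hlim₂ : Tendsto (fun t => Matrix.vecMul (ψ₂ t) (A t)) atTop (𝓝 0)) :
    ∀ t ≥ (0:ℝ), ψ₁ t = ψ₂ t := by
  set φ : ℝ → Fin m → ℝ := fun t => ψ₁ t - ψ₂ t with hφdef
  have hφ : ∀ t ≥ (0:ℝ), HasDerivWithinAt φ (-(Matrix.vecMul (φ t) (F t))) (Set.Ici 0) t := by
    intro t ht
    have h := (hψ₁ t ht).sub (hψ₂ t ht)
    convert h using 1
    all_goals try rfl
    funext j
    simp only [Matrix.vecMul, dotProduct, Pi.sub_apply, Pi.neg_apply, Pi.smul_apply,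
      smul_eq_mul, sub_mul, Finset.sum_sub_distrib]
    simp only [hφdef, Pi.sub_apply, sub_mul, Finset.sum_sub_distrib]
    ring
  -- zero derivative of each component of φ·A
  have key : ∀ t ≥ (0:ℝ), ∀ j, HasDerivWithinAt (fun s => ∑ i, φ s i * A s i j) 0 (Set.Ici 0) t := by
    intro t ht j
    have hd : HasDerivWithinAt (fun s => ∑ i, φ s i * A s i j)
        (∑ i, ((-(Matrix.vecMul (φ t) (F t))) i * A t i j + φ t i * ((F t * A t) i j)))
        (Set.Ici 0) t :=
      HasDerivWithinAt.fun_sum fun i _ =>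
        ((hasDerivWithinAt_pi.1 (hφ t ht) i).mul (hA t ht i j))
    convert hd using 1
    simp only [Matrix.vecMul, dotProduct, Matrix.mul_apply, Pi.neg_apply,
      neg_mul, Finset.sum_mul, Finset.mul_sum, Finset.sum_add_distrib, Finset.sum_neg_distrib]
    rw [Finset.sum_comm (s := Finset.univ) (t := Finset.univ)
      (f := fun i k => φ t i * (F t i k * A t k j))]
    ring_nf
  -- φ·A is constant
  have hconst : ∀ t ≥ (0:ℝ), ∀ j, ∑ i, φ t i * A t i j = ∑ i, φ 0 i * A 0 i j := by
    intro t ht j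
    have hcont : ContinuousOn (fun s => ∑ i, φ s i * A s i j) (Set.Icc 0 t) :=
      fun s hs => ((key s hs.1 j).continuousWithinAt).mono (Set.Icc_subset_Ici_self)
    exact constant_of_has_deriv_right_zero hcont
      (fun s hs => (key s hs.1 j).mono (Set.Ici_subset_Ici.2 hs.1)) t (Set.mem_Icc.2 ⟨ht, le_refl t⟩)
  -- the constant is 0
  have hvm : ∀ t, Matrix.vecMul (φ t) (A t) =
      Matrix.vecMul (ψ₁ t) (A t) - Matrix.vecMul (ψ₂ t) (A t) := by
    intro t; rw [hφdef]; exact Matrix.sub_vecMul _ _ _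
  have hlim : Tendsto (fun t => Matrix.vecMul (φ t) (A t)) atTop (𝓝 0) := by
    simpa [hvm] using hlim₁.sub hlim₂
  have hc0 : Matrix.vecMul (φ 0) (A 0) = 0 := by
    have hev : (fun t => Matrix.vecMul (φ t) (A t)) =ᶠ[atTop]
        (fun _ => Matrix.vecMul (φ 0) (A 0)) := by
      filter_upwards [eventually_ge_atTop (0:ℝ)] with t ht
      funext j
      simpa [Matrix.vecMul, dotProduct] using hconst t ht j
    have := hlim.congr' hev
    exact tendsto_const_nhds_iff.1 this
  have hφ0 : φ 0 = 0 := by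
    have := hc0
    rwa [hA0, Matrix.vecMul_one] at this
  -- Gronwall: φ t = 0 for t ≥ 0
  intro t ht
  have hnorm : ‖φ t‖ ≤ 0 := by
    -- bound on F on [0,t]
    obtain ⟨C, hC⟩ : ∃ C, ∀ s ∈ Set.Icc (0:ℝ) t, (∑ i, ∑ j, |F s i j|) ≤ C := by
      have hBc : ContinuousOn (fun s => ∑ i, ∑ j, |F s i j|) (Set.Icc 0 t) := by
        apply continuousOn_finset_sum
        intro i _
        apply continuousOn_finset_sum
        intro j _
        exact ((hFc i j).mono Set.Icc_subset_Ici_self).abs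
      rcases isCompact_Icc.exists_bound_of_continuousOn hBc with ⟨C, hC⟩
      exact ⟨C, fun s hs => le_trans (le_abs_self _) (by simpa using hC s hs)⟩
    have hC0 : 0 ≤ C := le_trans (by positivity) (hC 0 (Set.mem_Icc.2 ⟨le_refl 0, ht⟩))
    have hb : ∀ x ∈ Set.Ico (0:ℝ) t, ‖-(Matrix.vecMul (φ x) (F x))‖ ≤ C * ‖φ x‖ + 0 := by
      intro x hx
      rw [norm_neg, add_zero]
      rw [pi_norm_le_iff_of_nonneg (by positivity)]
      intro j
      calc ‖Matrix.vecMul (φ x) (F x) j‖ = |∑ i, φ x i * F x i j| := by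
              simp [Matrix.vecMul, dotProduct]
        _ ≤ ∑ i, |φ x i * F x i j| := Finset.abs_sum_le_sum_abs _ _
        _ ≤ ∑ i, ‖φ x‖ * |F x i j| := by
              apply Finset.sum_le_sum
              intro i _
              rw [abs_mul]
              exact mul_le_mul_of_nonneg_right (norm_le_pi_norm (φ x) i) (abs_nonneg _)
        _ = ‖φ x‖ * ∑ i, |F x i j| := by rw [Finset.mul_sum]
        _ ≤ ‖φ x‖ * ∑ i, ∑ j', |F x i j'| := by
              apply mul_le_mul_of_nonneg_left _ (norm_nonneg _)
              apply Finset.sum_le_sum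
              intro i _
              exact Finset.single_le_sum (fun j' _ => abs_nonneg (F x i j')) (Finset.mem_univ j)
        _ ≤ ‖φ x‖ * C := mul_le_mul_of_nonneg_left (hC x (Set.mem_Icc.2 ⟨hx.1, hx.2.le⟩)) (norm_nonneg _)
        _ = C * ‖φ x‖ := mul_comm _ _
    have hcont : ContinuousOn φ (Set.Icc 0 t) :=
      fun s hs => ((hφ s hs.1).continuousWithinAt).mono Set.Icc_subset_Ici_self
    have hderiv : ∀ x ∈ Set.Ico (0:ℝ) t, HasDerivWithinAt φ (-(Matrix.vecMul (φ x) (F x))) (Set.Ici x) x :=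
      fun x hx => (hφ x hx.1).mono (Set.Ici_subset_Ici.2 hx.1)
    have := norm_le_gronwallBound_of_norm_deriv_right_le hcont hderiv
      (by rw [hφ0, norm_zero]) hb t (Set.mem_Icc.2 ⟨ht, le_refl t⟩)
    simpa [gronwallBound_ε0] using this
  have : φ t = 0 := by
    have := le_antisymm hnorm (norm_nonneg _)
    exact norm_eq_zero.1 this
  have := sub_eq_zero.1 this
  exact this
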